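/- Let a₁, a₂, a₃ ∈ (0,1) with a₃ < 1 − a₁ < a₂, and let A₄ = [[0, 1, 1], [1, 0, 0], [a₁, a₂, a₃]]. Then the symmetric game with payoff matrix A₄ has exactly one symmetric Nash equilibrium x in the standard simplex of ℝ³, and this x has all three coordinates strictly positive. -/

import Mathlib

/-- `x` is a symmetric Nash equilibrium of the symmetric game with payoff matrix `A`:
`x` lies in the standard simplex of `ℝ³` and `xᵀAx ≥ yᵀAx` for all `y` in the simplex. -/
def IsSymNash (A : Matrix (Fin 3) (Fin 3) ℝ) (x : Fin 3 → ℝ) : Prop :=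
  (∀ j, 0 ≤ x j) ∧ (∑ j, x j = 1) ∧
    ∀ y : Fin 3 → ℝ, (∀ j, 0 ≤ y j) → (∑ j, y j = 1) →
      dotProduct y (A.mulVec x) ≤ dotProduct x (A.mulVec x)

/-- The symmetric game with the given payoff matrix has exactly one symmetric Nash
equilibrium, and it is completely mixed. -/
theorem classA4_unique_completely_mixed (a₁ a₂ a₃ : ℝ)
    (h₁ : a₁ ∈ Set.Ioo (0:ℝ) 1) (h₂ : a₂ ∈ Set.Ioo (0:ℝ) 1) (h₃ : a₃ ∈ Set.Ioo (0:ℝ) 1)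
    (ha : a₃ < 1 - a₁) (hb : 1 - a₁ < a₂) :
    ∃ x : Fin 3 → ℝ, IsSymNash !![0, 1, 1; 1, 0, 0; a₁, a₂, a₃] x ∧ (∀ j, 0 < x j) ∧
      ∀ y : Fin 3 → ℝ, IsSymNash !![0, 1, 1; 1, 0, 0; a₁, a₂, a₃] y → y = x := by
  obtain ⟨ha10, ha11⟩ := h₁
  obtain ⟨ha20, ha21⟩ := h₂
  obtain ⟨ha30, ha31⟩ := h₃
  have hden : (0:ℝ) < a₂ - a₃ := by linarith
  have hden' : (2*(a₂ - a₃)) ≠ 0 := by positivity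
  have hx1 : 0 < (1-a₁-a₃)/(2*(a₂-a₃)) := div_pos (by linarith) (by linarith)
  have hx2 : 0 < (a₂-1+a₁)/(2*(a₂-a₃)) := div_pos (by linarith) (by linarith)
  refine ⟨![1/2, (1-a₁-a₃)/(2*(a₂-a₃)), (a₂-1+a₁)/(2*(a₂-a₃))], ?_, ?_, ?_⟩
  · -- it is a Nash equilibrium
    refine ⟨?_, ?_, ?_⟩
    · intro j
      fin_cases j
      · norm_num
      · simpa using hx1.le
      · simpa using hx2.le
    · simp only [Fin.sum_univ_three, Matrix.cons_val_zero, Matrix.cons_val_one,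
        Matrix.head_cons, Matrix.cons_val_two, Matrix.tail_cons]
      field_simp
      ring
    · intro y hy0 hy1
      have hAx : ∀ j, (Matrix.mulVec !![0, 1, 1; 1, 0, 0; a₁, a₂, a₃]
          ![1/2, (1-a₁-a₃)/(2*(a₂-a₃)), (a₂-1+a₁)/(2*(a₂-a₃))]) j = 1/2 := by
        intro j
        fin_cases j <;>
          (simp [Matrix.mulVec, dotProduct, Fin.sum_univ_three];
            try (field_simp; ring))
      have hs' : y 0 + y 1 + y 2 = 1 := by simpa [Fin.sum_univ_three] using hy1
      have e1 : dotProduct y (Matrix.mulVec !![0, 1, 1; 1, 0, 0; a₁, a₂, a₃]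
          ![1/2, (1-a₁-a₃)/(2*(a₂-a₃)), (a₂-1+a₁)/(2*(a₂-a₃))]) = 1/2 := by
        simp only [dotProduct, Fin.sum_univ_three, hAx]
        linarith
      have e2 : dotProduct ![1/2, (1-a₁-a₃)/(2*(a₂-a₃)), (a₂-1+a₁)/(2*(a₂-a₃))]
          (Matrix.mulVec !![0, 1, 1; 1, 0, 0; a₁, a₂, a₃]
          ![1/2, (1-a₁-a₃)/(2*(a₂-a₃)), (a₂-1+a₁)/(2*(a₂-a₃))]) = 1/2 := by
        simp only [dotProduct, Fin.sum_univ_three, hAx, Matrix.cons_val_zero,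
          Matrix.cons_val_one, Matrix.head_cons, Matrix.cons_val_two, Matrix.tail_cons]
        field_simp
        ring
      rw [e1, e2]
  · -- completely mixed
    intro j
    fin_cases j
    · norm_num
    · simpa using hx1
    · simpa using hx2
  · -- uniqueness
    intro y hy
    obtain ⟨hy0, hy1, hyN⟩ := hy
    set b := y 0 with hbdef
    set c := y 1 with hcdef
    set d := y 2 with hddef
    have hbn : 0 ≤ b := hy0 0
    have hcn : 0 ≤ c := hy0 1
    have hdn : 0 ≤ d := hy0 2
    have hs : b + c + d = 1 := by
      have := hy1; simpa [Fin.sum_univ_three] using this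
    have hAy : Matrix.mulVec !![0, 1, 1; 1, 0, 0; a₁, a₂, a₃] y =
        ![c + d, b, a₁*b + a₂*c + a₃*d] := by
      funext j
      fin_cases j <;>
        (simp [Matrix.mulVec, dotProduct, Fin.sum_univ_three, ← hbdef, ← hcdef, ← hddef];
          try ring)
    set v : ℝ := dotProduct y (Matrix.mulVec !![0, 1, 1; 1, 0, 0; a₁, a₂, a₃] y) with hvdef
    have hv : v = b*(c+d) + c*b + d*(a₁*b + a₂*c + a₃*d) := by
      rw [hvdef, hAy]
      simp only [dotProduct, Fin.sum_univ_three, Matrix.cons_val_zero,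
        Matrix.cons_val_one, Matrix.head_cons, Matrix.cons_val_two, Matrix.tail_cons,
        ← hbdef, ← hcdef, ← hddef]
      try ring
    -- payoff inequalities from unit vectors
    have unit : ∀ j : Fin 3, (Matrix.mulVec !![0, 1, 1; 1, 0, 0; a₁, a₂, a₃] y) j ≤ v := by
      intro j
      have hle := hyN (fun i => if i = j then 1 else 0)
        (fun i => by by_cases h : i = j <;> simp [h])
        (by fin_cases j <;> simp [Fin.sum_univ_three])
      calc (Matrix.mulVec !![0, 1, 1; 1, 0, 0; a₁, a₂, a₃] y) j
          = dotProduct (fun i => if i = j then 1 else 0)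
            (Matrix.mulVec !![0, 1, 1; 1, 0, 0; a₁, a₂, a₃] y) := by
            simp only [dotProduct, Fin.sum_univ_three]
            fin_cases j <;> simp
        _ ≤ v := hle
    have p0 : c + d ≤ v := by have := unit 0; rw [hAy] at this; simpa using this
    have p1 : b ≤ v := by have := unit 1; rw [hAy] at this; simpa using this
    have p2 : a₁*b + a₂*c + a₃*d ≤ v := by have := unit 2; rw [hAy] at this; simpa using this
    -- complementary slackness
    have t0 : 0 ≤ b*(v-(c+d)) := mul_nonneg hbn (by linarith)
    have t1 : 0 ≤ c*(v-b) := mul_nonneg hcn (by linarith)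
    have t2 : 0 ≤ d*(v-(a₁*b + a₂*c + a₃*d)) := mul_nonneg hdn (by linarith)
    have hzero : b*(v-(c+d)) + c*(v-b) + d*(v-(a₁*b + a₂*c + a₃*d)) = 0 := by
      have hone : (b + c + d) * v = v := by rw [hs]; ring
      linear_combination hone + hv
    have e0 : b*(v-(c+d)) = 0 := by linarith
    have e1 : c*(v-b) = 0 := by linarith
    have e2 : d*(v-(a₁*b + a₂*c + a₃*d)) = 0 := by linarith
    -- b > 0
    have hbpos : 0 < b := by
      rcases hbn.lt_or_eq with h | h
      · exact h
      · exfalso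
        have hb0 : b = 0 := h.symm
        have hcd1 : c + d = 1 := by linarith
        have hv' : v = d*(a₂*c + a₃*d) := by rw [hv, hb0]; ring
        have hX : 0 ≤ a₂*c + a₃*d :=
          add_nonneg (mul_nonneg ha20.le hcn) (mul_nonneg ha30.le hdn)
        have q1 : 0 ≤ (1-a₂)*c := mul_nonneg (by linarith) hcn
        have q2 : 0 ≤ (1-a₃)*d := mul_nonneg (by linarith) hdn
        have hsmall : a₂*c + a₃*d < 1 := by
          rcases le_or_gt c (1/2) with hc2 | hc2
          · have q2' : (1-a₃)*(1/2) ≤ (1-a₃)*d :=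
              mul_le_mul_of_nonneg_left (by linarith) (by linarith)
            linarith
          · have q1' : (1-a₂)*(1/2) ≤ (1-a₂)*c :=
              mul_le_mul_of_nonneg_left (by linarith) (by linarith)
            linarith
        have q3 : 0 ≤ (1 - d)*(a₂*c + a₃*d) := mul_nonneg (by linarith) hX
        linarith
    have hvcd : v = c + d := by
      rcases mul_eq_zero.mp e0 with h | h
      · exact absurd h (ne_of_gt hbpos)
      · linarith
    -- d > 0
    have hdpos : 0 < d := by
      rcases hdn.lt_or_eq with h | h
      · exact h
      · exfalso
        have hd0 : d = 0 := h.symm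
        rcases hcn.lt_or_eq with hcp | hc0
        · have hvb : v = b := by
            rcases mul_eq_zero.mp e1 with h' | h'
            · exact absurd h' (ne_of_gt hcp)
            · linarith
          have hbhalf : b = 1/2 := by rw [hd0] at hvcd hs; linarith
          have hchalf : c = 1/2 := by rw [hd0] at hs; linarith
          rw [hd0, hbhalf, hchalf] at p2
          rw [hbhalf] at hvb
          linarith
        · have hb1 : b = 1 := by rw [hd0, ← hc0] at hs; linarith
          rw [hd0, ← hc0] at hvcd
          linarith
    -- c > 0
    have hcpos : 0 < c := by
      rcases hcn.lt_or_eq with h | h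
      · exact h
      · exfalso
        have hc0 : c = 0 := h.symm
        have hp3 : a₁*b + a₂*c + a₃*d = v := by
          rcases mul_eq_zero.mp e2 with h' | h'
          · exact absurd h' (ne_of_gt hdpos)
          · linarith
        rw [hc0] at hvcd hp3
        -- v = d, b ≤ d, a₁ b + a₃ d = d
        have hbd : b ≤ d := by linarith
        have h1 : a₁ * b ≤ a₁ * d := mul_le_mul_of_nonneg_left hbd ha10.le
        have h2 : a₁ * d < (1 - a₃) * d := by
          apply mul_lt_mul_of_pos_right (by linarith) hdpos
        linarith
    -- now all positive: solve the linear system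
    have hvb : v = b := by
      rcases mul_eq_zero.mp e1 with h' | h'
      · exact absurd h' (ne_of_gt hcpos)
      · linarith
    have hp3 : a₁*b + a₂*c + a₃*d = v := by
      rcases mul_eq_zero.mp e2 with h' | h'
      · exact absurd h' (ne_of_gt hdpos)
      · linarith
    have hbhalf : b = 1/2 := by linarith
    have hd' : d = 1/2 - c := by linarith
    have hkey : c * (a₂ - a₃) = (1-a₁-a₃)/2 := by
      linear_combination hp3 + hvb + (1-a₁)*hbhalf - a₃*hd'
    have hcval : c = (1-a₁-a₃)/(2*(a₂-a₃)) := by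
      rw [eq_div_iff hden']
      linear_combination 2*hkey
    have hdval : d = (a₂-1+a₁)/(2*(a₂-a₃)) := by
      rw [eq_div_iff hden']
      linear_combination (a₂-a₃)*2*hd' - 2*hkey
    funext i
    fin_cases i
    · simpa using hbhalf
    · simpa using hcval
    · simpa using hdval
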